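/- The left-hand distributive law r;(s+t)=r;s+r;t is independent of the axiom set (R1)-(R6), (R8), (R9), (R10): in the algebra A7 on a Boolean algebra with at least four elements, with 1' an atom, r;s = r if s=1' and 0 otherwise, and converse the identity, all of (R1)-(R6), (R8)-(R10) hold, but r;(1'+0') = r;1 = 0 ≠ r = r;1' + r;0' for any nonzero r different from 1 with 0' := -1'. -/
import Mathlib


/-- The left-hand distributive law (R8') is independent of the axiom set
(R1)-(R6), (R8), (R9), (R10): in the algebra A7, built on a Boolean algebra
with at least four elements with 1' an atom, where r;s = r if s = 1' and
r;s = 0 otherwise, and converse is the identity, all of (R1)-(R6) and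
(R8)-(R10) hold, but (R8') fails: r;(1'+0') = r;1 = 0 ≠ r = r;1' + r;0'
for any nonzero r different from 1, where 0' = -1'. -/
theorem R8'_independent {A : Type*} [BooleanAlgebra A] [DecidableEq A]
    (h4 : ∃ a b c d : A, a ≠ b ∧ a ≠ c ∧ a ≠ d ∧ b ≠ c ∧ b ≠ d ∧ c ≠ d)
    (e : A) (he : IsAtom e) :
    let mul : A → A → A := fun r s => if s = e then r else ⊥
    (∀ r s : A, r ⊔ s = s ⊔ r) ∧
    (∀ r s t : A, r ⊔ (s ⊔ t) = (r ⊔ s) ⊔ t) ∧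
    (∀ r s : A, (rᶜ ⊔ s)ᶜ ⊔ (rᶜ ⊔ sᶜ)ᶜ = r) ∧
    (∀ r s t : A, mul r (mul s t) = mul (mul r s) t) ∧
    (∀ r : A, mul r e = r) ∧
    (∀ r : A, id (id r) = r) ∧
    (∀ r s t : A, mul (r ⊔ s) t = mul r t ⊔ mul s t) ∧
    (∀ r s : A, id (r ⊔ s) = id r ⊔ id s) ∧
    (∀ r s : A, mul (id r) (mul r s)ᶜ ⊔ sᶜ = sᶜ) ∧
    ¬ (∀ r s t : A, mul r (s ⊔ t) = mul r s ⊔ mul r t) ∧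
    (∀ r : A, r ≠ ⊥ → r ≠ ⊤ →
      mul r (e ⊔ eᶜ) = ⊥ ∧ mul r e ⊔ mul r eᶜ = r ∧ (⊥ : A) ≠ r) := by
  intro mul
  have hbot : e ≠ ⊥ := he.1
  -- e ≠ ⊤ : otherwise every element is ⊥ or ⊤, contradicting four elements
  have htop : e ≠ ⊤ := by
    intro h
    obtain ⟨a, b, c, d, hab, hac, had, hbc, hbd, hcd⟩ := h4
    have key : ∀ x : A, x = ⊥ ∨ x = ⊤ := by
      intro x
      rcases eq_or_ne x ⊤ with hx | hx
      · exact Or.inr hx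
      · exact Or.inl (he.2 x (h ▸ lt_top_iff_ne_top.2 hx))
    rcases key a with ha | ha <;> rcases key b with hb | hb <;>
      rcases key c with hc | hc <;> simp_all
  have hec : eᶜ ≠ e := by
    intro h
    have h2 : e ⊓ eᶜ = ⊥ := inf_compl_eq_bot
    rw [h, inf_idem] at h2
    exact hbot h2
  have hbot' : ⊥ ≠ e := Ne.symm hbot
  have htop' : ⊤ ≠ e := Ne.symm htop
  refine ⟨fun r s => sup_comm r s, fun r s t => (sup_assoc r s t).symm, ?_, ?_, ?_,
    fun r => rfl, ?_, fun r s => rfl, ?_, ?_, ?_⟩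
  · intro r s
    rw [compl_sup, compl_sup, compl_compl, compl_compl, ← inf_sup_left,
      sup_comm sᶜ s, sup_compl_eq_top, inf_top_eq]
  · intro r s t
    by_cases ht : t = e
    · simp [mul, ht]
    · simp [mul, ht, hbot']
  · intro r; simp [mul]
  · intro r s t
    by_cases ht : t = e <;> simp [mul, ht]
  · intro r s
    by_cases hs : s = e
    · by_cases hr : rᶜ = e
      · have hre : r = eᶜ := by rw [← hr, compl_compl]
        simp [mul, hs, hr, hre, hec]
      · simp [mul, hs, hr]
    · simp [mul, hs, compl_bot, htop', hbot']
  · intro h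
    have := h e e eᶜ
    simp [mul, htop', hec, hbot', hbot] at this
  · intro r hr0 hr1
    refine ⟨?_, ?_, Ne.symm hr0⟩
    · simp [mul, htop']
    · simp [mul, hec]
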